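/- There exists λ₀ > 0 such that for every λ > λ₀, every energy E with |E| ≤ 2λ and every β ∈ ℝ, the set Ω₀ = ⋃_{k∈ℕ} {x ∈ 𝕋 : cos θ_k(x) = 0} has Lebesgue measure zero. -/

import Mathlib

open MeasureTheory Real Set

noncomputable def Tdbl (x : ℝ) : ℝ := Int.fract (2 * x)

structure GoodPotential (f : ℝ → ℝ) (c₀ : ℝ) : Prop where
  c₀_pos : 0 < c₀
  f_zero : f 0 = 0
  lim_right : Filter.Tendsto f (nhdsWithin 0 (Set.Ioi 0)) (nhds 0)
  lim_left : Filter.Tendsto f (nhdsWithin 1 (Set.Iio 1)) (nhds (1 : ℝ))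
  deriv_right_zero : HasDerivWithinAt f 1 (Set.Ici 0) 0
  hasDeriv : ∀ x ∈ Set.Ioo (0 : ℝ) 1, HasDerivAt f (deriv f x) x
  deriv_cont : ContinuousOn (deriv f) (Set.Ioo (0 : ℝ) 1)
  deriv_mem : ∀ x ∈ Set.Ioo (0 : ℝ) 1, deriv f x ∈ Set.Ioc c₀ 1
  mono : MonotoneOn f (Set.Ico (0 : ℝ) 1)

noncomputable def transferA (f : ℝ → ℝ) (lam E x : ℝ) : Matrix (Fin 2) (Fin 2) ℝ :=
  !![E - lam * f x, -1; 1, 0]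

noncomputable def cocycleA (f : ℝ → ℝ) (lam E x : ℝ) : ℕ → Matrix (Fin 2) (Fin 2) ℝ
  | 0 => 1
  | n + 1 => transferA f lam E (Tdbl^[n + 1] x) * cocycleA f lam E x n

noncomputable def matOpNorm {m : ℕ} (M : Matrix (Fin m) (Fin m) ℝ) : ℝ :=
  ‖LinearMap.toContinuousLinearMap (Matrix.toEuclideanLin M)‖

noncomputable def LnA (f : ℝ → ℝ) (lam E : ℝ) (n : ℕ) : ℝ :=
  (1 / (n : ℝ)) * ∫ x in Set.Ico (0 : ℝ) 1, Real.log (matOpNorm (cocycleA f lam E x n))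
/-- g(x) = (t − f(x))² + 1. -/
noncomputable def gfun (f : ℝ → ℝ) (t x : ℝ) : ℝ := (t - f x) ^ 2 + 1

/-- The inverse cotangent with values in (0, π). -/
noncomputable def arccot (z : ℝ) : ℝ := Real.pi / 2 - Real.arctan z

open Classical in
/-- The angles θ_n(x) of the polar-coordinate cocycle: θ₀(x) = arccot(E/λ − f(x)) + β and
θ_n(x) = φ_n(x) + θ₀(Tⁿx), where φ_n(x) = arccot(λ²·g(Tⁿx)·cot θ_{n−1}(x)) + ⌊θ_{n−1}(x)/π⌋·π
if θ_{n−1}(x) ∉ πℤ, and φ_n(x) = ⌊θ_{n−1}(x)/π⌋·π otherwise. -/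
noncomputable def theta (f : ℝ → ℝ) (lam E β : ℝ) : ℕ → ℝ → ℝ
  | 0 => fun x => arccot (E / lam - f x) + β
  | n + 1 => fun x =>
      (if ∃ m : ℤ, theta f lam E β n x = m * Real.pi then
        (⌊theta f lam E β n x / Real.pi⌋ : ℝ) * Real.pi
      else
        arccot (lam ^ 2 * gfun f (E / lam) (Tdbl^[n + 1] x) * Real.cot (theta f lam E β n x)) +
          (⌊theta f lam E β n x / Real.pi⌋ : ℝ) * Real.pi)
      + (arccot (E / lam - f (Tdbl^[n + 1] x)) + β)

/-- The null set Ω₀ = ⋃ₖ {x : cos θ_k(x) = 0} (within [0,1)). -/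
def Omega0 (f : ℝ → ℝ) (lam E β : ℝ) : Set ℝ :=
  {x | ∃ k : ℕ, Real.cos (theta f lam E β k x) = 0}


/-- smooth model of the lifted projective action -/
noncomputable def LS (a θ : ℝ) : ℝ :=
  θ - Real.arctan ((a - 1) * Real.sin θ * Real.cos θ / (Real.sin θ ^ 2 + a * Real.cos θ ^ 2))

lemma arccot_cot {w : ℝ} (h0 : 0 < w) (h1 : w < π) : arccot (Real.cot w) = w := by
  have ht : Real.tan (π / 2 - w) = Real.cot w := by
    rw [Real.tan_eq_sin_div_cos, Real.sin_pi_div_two_sub, Real.cos_pi_div_two_sub,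
      Real.cot_eq_cos_div_sin]
  rw [arccot, ← ht, Real.arctan_tan (by linarith) (by linarith)]
  ring

lemma den_pos {a s c : ℝ} (ha : 0 < a) (hsc : s ^ 2 + c ^ 2 = 1) : 0 < s ^ 2 + a * c ^ 2 := by
  rcases eq_or_lt_of_le (sq_nonneg s) with h | h
  · have hc2 : c ^ 2 = 1 := by linarith
    nlinarith [mul_pos ha (show (0:ℝ) < c ^ 2 by rw [hc2]; norm_num)]
  · nlinarith [mul_nonneg ha.le (sq_nonneg c)]

lemma core_id {a θ : ℝ} (ha : 0 < a) (h0 : 0 < θ) (h1 : θ < π) :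
    arccot (a * Real.cot θ) = LS a θ := by
  set s := Real.sin θ with hs
  set c := Real.cos θ with hc
  have hsc : s ^ 2 + c ^ 2 = 1 := by rw [hs, hc]; exact Real.sin_sq_add_cos_sq θ
  have hspos : 0 < s := Real.sin_pos_of_pos_of_lt_pi h0 h1
  have hD : 0 < s ^ 2 + a * c ^ 2 := den_pos ha hsc
  set T : ℝ := (a - 1) * s * c / (s ^ 2 + a * c ^ 2) with hT
  set δ : ℝ := Real.arctan T with hδ
  have hδ2 : δ < π / 2 := Real.arctan_lt_pi_div_two T
  have hδ2' : -(π / 2) < δ := Real.neg_pi_div_two_lt_arctan T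
  have hw0 : 0 < θ - δ := by
    rcases le_or_gt δ 0 with h | h
    · linarith
    · rcases le_or_gt (π / 2) θ with h2 | h2
      · linarith
      · have hcpos : 0 < c := by
          rw [hc]; exact Real.cos_pos_of_mem_Ioo ⟨by linarith, h2⟩
        have htanθ : Real.tan θ = s / c := Real.tan_eq_sin_div_cos θ
        have hTlt : T < s / c := by
          rw [hT, div_lt_div_iff₀ hD hcpos]
          nlinarith
        have := Real.arctan_strictMono hTlt
        rw [← htanθ, Real.arctan_tan (by linarith) h2] at this
        linarith
  have hwπ : θ - δ < π := by
    rcases le_or_gt 0 δ with h | h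
    · linarith
    · rcases le_or_gt θ (π / 2) with h2 | h2
      · linarith
      · have hcneg : c < 0 := by
          rw [hc]; exact Real.cos_neg_of_pi_div_two_lt_of_lt h2 (by linarith [Real.pi_pos])
        have htanθ : Real.tan θ = s / c := Real.tan_eq_sin_div_cos θ
        have hlt : s / c < T := by
          rw [div_lt_iff_of_neg hcneg, hT, div_mul_eq_mul_div, div_lt_iff₀ hD]
          nlinarith
        have h3 : Real.tan (θ - π) = s / c := by
          rw [← htanθ]; exact Real.tan_periodic.sub_eq θ
        have := Real.arctan_strictMono hlt
        rw [← h3, Real.arctan_tan (by linarith) (by linarith)] at this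
        linarith
  have hsd : Real.sin δ = T * Real.cos δ := by
    rw [hδ, Real.sin_arctan, Real.cos_arctan]; ring
  have hcosδ : 0 < Real.cos δ := Real.cos_arctan_pos T
  have hkey1 : s - c * T = s / (s ^ 2 + a * c ^ 2) := by
    rw [hT]; field_simp; linear_combination hsc
  have hkey2 : c + s * T = a * c / (s ^ 2 + a * c ^ 2) := by
    rw [hT]; field_simp; linear_combination a * c * hsc
  have hsinw : Real.sin (θ - δ) = Real.cos δ * (s / (s ^ 2 + a * c ^ 2)) := by
    rw [Real.sin_sub, hsd, ← hs, ← hc, ← hkey1]; ring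
  have hcosw : Real.cos (θ - δ) = Real.cos δ * (a * c / (s ^ 2 + a * c ^ 2)) := by
    rw [Real.cos_sub, hsd, ← hs, ← hc, ← hkey2]; ring
  have hcot : Real.cot (θ - δ) = a * Real.cot θ := by
    rw [Real.cot_eq_cos_div_sin, Real.cot_eq_cos_div_sin, hcosw, hsinw, ← hs, ← hc]
    rw [mul_div_mul_left _ _ (ne_of_gt hcosδ)]
    field_simp
  rw [← hcot, arccot_cot hw0 hwπ, LS]

/-- smooth version of theta -/
noncomputable def thetaS (f : ℝ → ℝ) (lam E β : ℝ) : ℕ → ℝ → ℝ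
  | 0 => fun x => arccot (E / lam - f x) + β
  | n + 1 => fun x =>
      LS (lam ^ 2 * gfun f (E / lam) (Tdbl^[n + 1] x)) (thetaS f lam E β n x)
      + (arccot (E / lam - f (Tdbl^[n + 1] x)) + β)

lemma LS_add_int_mul_pi (a θ : ℝ) (m : ℤ) : LS a (θ + m * π) = LS a θ + m * π := by
  have h1 : Real.sin (θ + m * π) = (-1) ^ m * Real.sin θ := Real.sin_add_int_mul_pi θ m
  have h2 : Real.cos (θ + m * π) = (-1) ^ m * Real.cos θ := Real.cos_add_int_mul_pi θ m
  have hε : ((-1 : ℝ) ^ m) * ((-1 : ℝ) ^ m) = 1 := by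
    rw [← zpow_add₀ (by norm_num : (-1:ℝ) ≠ 0)]
    have : m + m = 2 * m := by ring
    rw [this, zpow_mul]
    norm_num
  unfold LS
  rw [h1, h2]
  have e1 : (a - 1) * ((-1:ℝ) ^ m * Real.sin θ) * ((-1:ℝ) ^ m * Real.cos θ)
      = (a - 1) * Real.sin θ * Real.cos θ := by
    linear_combination ((a - 1) * Real.sin θ * Real.cos θ) * hε
  have e2 : ((-1:ℝ) ^ m * Real.sin θ) ^ 2 + a * ((-1:ℝ) ^ m * Real.cos θ) ^ 2
      = Real.sin θ ^ 2 + a * Real.cos θ ^ 2 := by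
    linear_combination (Real.sin θ ^ 2 + a * Real.cos θ ^ 2) * hε
  rw [e1, e2]; ring

lemma cot_add_int_mul_pi (θ : ℝ) (m : ℤ) : Real.cot (θ + m * π) = Real.cot θ := by
  have h1 : Real.sin (θ + m * π) = (-1) ^ m * Real.sin θ := Real.sin_add_int_mul_pi θ m
  have h2 : Real.cos (θ + m * π) = (-1) ^ m * Real.cos θ := Real.cos_add_int_mul_pi θ m
  have hε : ((-1 : ℝ) ^ m) ≠ 0 := by
    intro h
    have := zpow_ne_zero m (by norm_num : (-1:ℝ) ≠ 0)
    exact this h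
  rw [Real.cot_eq_cos_div_sin, Real.cot_eq_cos_div_sin, h1, h2,
    mul_div_mul_left _ _ hε]

open Classical in
lemma branch_eq (a θ : ℝ) (ha : 0 < a) :
    ((if ∃ m : ℤ, θ = m * Real.pi then ((⌊θ / Real.pi⌋ : ℝ) * Real.pi)
      else arccot (a * Real.cot θ) + (⌊θ / Real.pi⌋ : ℝ) * Real.pi)) = LS a θ := by
  by_cases h : ∃ m : ℤ, θ = m * Real.pi
  · rw [if_pos h]
    obtain ⟨m, rfl⟩ := h
    have hfl : ⌊(m : ℝ) * π / π⌋ = m := by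
      rw [mul_div_assoc, div_self Real.pi_ne_zero, mul_one, Int.floor_intCast]
    rw [hfl]
    unfold LS
    rw [Real.sin_int_mul_pi]
    simp
  · rw [if_neg h]
    set m : ℤ := ⌊θ / π⌋ with hm
    have hpi := Real.pi_pos
    have h1 : (m : ℝ) ≤ θ / π := Int.floor_le _
    have h2 : θ / π < m + 1 := Int.lt_floor_add_one _
    have hθ1 : (m : ℝ) * π ≤ θ := (le_div_iff₀ hpi).mp h1
    have hθ2 : θ < ((m : ℝ) + 1) * π := (div_lt_iff₀ hpi).mp h2
    set θ' : ℝ := θ - m * π with hθ'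
    have hθ'0 : 0 < θ' := by
      rcases lt_or_eq_of_le hθ1 with h' | h'
      · simpa [hθ'] using sub_pos.mpr h'
      · exfalso; exact h ⟨m, h'.symm⟩
    have hθ'π : θ' < π := by rw [hθ']; nlinarith
    have hθeq : θ = θ' + m * π := by ring
    rw [hθeq, cot_add_int_mul_pi, LS_add_int_mul_pi, core_id ha hθ'0 hθ'π]

lemma theta_eq_thetaS (f : ℝ → ℝ) (lam E β : ℝ) (hlam : lam ≠ 0) (n : ℕ) (x : ℝ) :
    theta f lam E β n x = thetaS f lam E β n x := by
  induction n with
  | zero => rfl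
  | succ n ih =>
      have ha : 0 < lam ^ 2 * gfun f (E / lam) (Tdbl^[n + 1] x) := by
        have : (0:ℝ) < lam ^ 2 := by positivity
        have hg : (0:ℝ) < gfun f (E / lam) (Tdbl^[n + 1] x) := by
          unfold gfun; positivity
        positivity
      have key := branch_eq (lam ^ 2 * gfun f (E / lam) (Tdbl^[n + 1] x))
        (thetaS f lam E β n x) ha
      simp only [theta, thetaS]
      by_cases hc : ∃ m : ℤ, theta f lam E β n x = (m : ℝ) * Real.pi
      · have hc' : ∃ m : ℤ, thetaS f lam E β n x = (m : ℝ) * Real.pi := by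
          rw [← ih]; exact hc
        rw [if_pos hc, ih, ← key, if_pos hc']
      · have hc' : ¬ ∃ m : ℤ, thetaS f lam E β n x = (m : ℝ) * Real.pi := by
          rw [← ih]; exact hc
        rw [if_neg hc, ih, ← key, if_neg hc']

lemma hasDerivAt_LS_comp {A Θ : ℝ → ℝ} {A' Θ' x : ℝ}
    (hA : HasDerivAt A A' x) (hΘ : HasDerivAt Θ Θ' x) (ha : 0 < A x) :
    HasDerivAt (fun z => LS (A z) (Θ z))
      ((A x * Θ' - Real.sin (Θ x) * Real.cos (Θ x) * A') /
        (Real.sin (Θ x) ^ 2 + (A x) ^ 2 * Real.cos (Θ x) ^ 2)) x := by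
  set a := A x with hadef
  set s := Real.sin (Θ x) with hsdef
  set c := Real.cos (Θ x) with hcdef
  have hsc : s ^ 2 + c ^ 2 = 1 := by
    have := Real.sin_sq_add_cos_sq (Θ x); linarith [this]
  have hD : 0 < s ^ 2 + a * c ^ 2 := den_pos ha hsc
  have hR : 0 < s ^ 2 + a ^ 2 * c ^ 2 := den_pos (by positivity) hsc
  have hRe : (s ^ 2 + a ^ 2 * c ^ 2) ≠ 0 := ne_of_gt hR
  have hN : HasDerivAt (fun z => (A z - 1) * Real.sin (Θ z) * Real.cos (Θ z))
      (A' * s * c + Θ' * (a - 1) * (c ^ 2 - s ^ 2)) x := by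
    have h := ((hA.sub_const 1).mul hΘ.sin).mul hΘ.cos
    refine h.congr_deriv ?_
    simp only [Pi.mul_apply, Pi.div_apply, ← hadef, ← hsdef, ← hcdef]
    ring
  have hDen : HasDerivAt (fun z => Real.sin (Θ z) ^ 2 + A z * Real.cos (Θ z) ^ 2)
      (Θ' * 2 * s * c * (1 - a) + A' * c ^ 2) x := by
    have h := (hΘ.sin.pow 2).add (hA.mul (hΘ.cos.pow 2))
    refine h.congr_deriv ?_
    simp only [Pi.mul_apply, Pi.div_apply, ← hadef, ← hsdef, ← hcdef]
    norm_num
    ring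
  have harct : HasDerivAt
      (fun z => Real.arctan ((A z - 1) * Real.sin (Θ z) * Real.cos (Θ z) /
        (Real.sin (Θ z) ^ 2 + A z * Real.cos (Θ z) ^ 2)))
      (((A' * s * c + Θ' * (a - 1) * (c ^ 2 - s ^ 2)) * (s ^ 2 + a * c ^ 2)
        - ((a - 1) * s * c) * (Θ' * 2 * s * c * (1 - a) + A' * c ^ 2)) /
        ((s ^ 2 + a * c ^ 2) ^ 2 + ((a - 1) * s * c) ^ 2)) x := by
    have h := (hN.div hDen hD.ne').arctan
    refine h.congr_deriv ?_
    simp only [Pi.mul_apply, Pi.div_apply, ← hadef, ← hsdef, ← hcdef]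
    have hDn2N : ((s ^ 2 + a * c ^ 2) ^ 2 + ((a - 1) * s * c) ^ 2) ≠ 0 := by positivity
    field_simp
  have htot := hΘ.sub harct
  have hfun : (fun z => Θ z - Real.arctan ((A z - 1) * Real.sin (Θ z) * Real.cos (Θ z) /
        (Real.sin (Θ z) ^ 2 + A z * Real.cos (Θ z) ^ 2))) = fun z => LS (A z) (Θ z) := by
    funext z; rw [LS]
  rw [← hfun]
  refine htot.congr_deriv (Eq.symm ?_)
  have e1 : (s ^ 2 + a * c ^ 2) ^ 2 + ((a - 1) * s * c) ^ 2 = s ^ 2 + a ^ 2 * c ^ 2 := by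
    linear_combination (s ^ 2 + a ^ 2 * c ^ 2) * hsc
  rw [e1]
  have e2 : Θ' - ((A' * s * c + Θ' * (a - 1) * (c ^ 2 - s ^ 2)) * (s ^ 2 + a * c ^ 2)
        - ((a - 1) * s * c) * (Θ' * 2 * s * c * (1 - a) + A' * c ^ 2)) / (s ^ 2 + a ^ 2 * c ^ 2)
      = (Θ' * (s ^ 2 + a ^ 2 * c ^ 2)
        - ((A' * s * c + Θ' * (a - 1) * (c ^ 2 - s ^ 2)) * (s ^ 2 + a * c ^ 2)
        - ((a - 1) * s * c) * (Θ' * 2 * s * c * (1 - a) + A' * c ^ 2))) / (s ^ 2 + a ^ 2 * c ^ 2) := by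
    rw [sub_div' hRe]
  rw [e2]
  congr 1
  linear_combination (A' * s * c - Θ' * (a - (a - 1) * (a * c ^ 2 - s ^ 2))) * hsc

lemma Tdbl_iterate {x : ℝ} (hx : x ∈ Set.Ioo (0:ℝ) 1) (i : ℕ) :
    Tdbl^[i] x = Int.fract ((2:ℝ) ^ i * x) := by
  induction i with
  | zero => simp [Int.fract_eq_self.mpr ⟨hx.1.le, hx.2⟩]
  | succ i ih =>
      rw [Function.iterate_succ_apply', ih, Tdbl]
      have h2 : 2 * Int.fract ((2:ℝ) ^ i * x) = 2 * ((2:ℝ) ^ i * x) - ((2 * ⌊(2:ℝ) ^ i * x⌋ : ℤ) : ℝ) := by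
        rw [Int.fract]; push_cast; ring
      rw [h2, Int.fract_sub_intCast]
      congr 1
      ring

lemma fract_mem_Ioo {y : ℝ} (hy : ∀ m : ℤ, y ≠ m) : Int.fract y ∈ Set.Ioo (0:ℝ) 1 := by
  refine ⟨?_, Int.fract_lt_one y⟩
  rcases lt_or_eq_of_le (Int.fract_nonneg y) with h | h
  · exact h
  · exfalso
    have : y = (⌊y⌋ : ℝ) := by
      have := h.symm
      rw [Int.fract] at this
      linarith
    exact hy ⌊y⌋ this

lemma Tdbl_iter_mem {x : ℝ} (hx : x ∈ Set.Ioo (0:ℝ) 1) (i : ℕ)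
    (hni : ∀ m : ℤ, (2:ℝ) ^ i * x ≠ m) : Tdbl^[i] x ∈ Set.Ioo (0:ℝ) 1 := by
  rw [Tdbl_iterate hx i]
  exact fract_mem_Ioo hni

lemma hasDerivAt_Tdbl_iter {x : ℝ} (hx : x ∈ Set.Ioo (0:ℝ) 1) (i : ℕ)
    (hni : ∀ m : ℤ, (2:ℝ) ^ i * x ≠ m) :
    HasDerivAt (fun z => Tdbl^[i] z) ((2:ℝ) ^ i) x := by
  have hne : (2:ℝ) ^ i * x ≠ (⌊(2:ℝ) ^ i * x⌋ : ℝ) := hni ⌊(2:ℝ) ^ i * x⌋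
  have hflt : (⌊(2:ℝ) ^ i * x⌋ : ℝ) < (2:ℝ) ^ i * x :=
    lt_of_le_of_ne (Int.floor_le _) (Ne.symm hne)
  have h1 : Set.Ioo (0:ℝ) 1 ∈ nhds x := Ioo_mem_nhds hx.1 hx.2
  have hcont : ContinuousAt (fun z : ℝ => (2:ℝ) ^ i * z) x :=
    (continuous_const.mul continuous_id).continuousAt
  have h2 : {z : ℝ | (2:ℝ) ^ i * z ∈
      Set.Ioo ((⌊(2:ℝ) ^ i * x⌋ : ℝ)) ((⌊(2:ℝ) ^ i * x⌋ : ℝ) + 1)} ∈ nhds x := by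
    apply hcont
    exact Ioo_mem_nhds hflt (Int.lt_floor_add_one _)
  have heq : ∀ᶠ z in nhds x, Tdbl^[i] z = (2:ℝ) ^ i * z - (⌊(2:ℝ) ^ i * x⌋ : ℝ) := by
    filter_upwards [h1, h2] with z hz1 hz2
    rw [Tdbl_iterate hz1 i]
    have hfz : ⌊(2:ℝ) ^ i * z⌋ = ⌊(2:ℝ) ^ i * x⌋ := by
      rw [Int.floor_eq_iff]
      · exact ⟨hz2.1.le, by exact_mod_cast hz2.2⟩
    rw [Int.fract, hfz]
  have hlin : HasDerivAt (fun z : ℝ => (2:ℝ) ^ i * z - (⌊(2:ℝ) ^ i * x⌋ : ℝ)) ((2:ℝ) ^ i) x := by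
    have := ((hasDerivAt_id x).const_mul ((2:ℝ) ^ i)).sub_const ((⌊(2:ℝ) ^ i * x⌋ : ℝ))
    simpa using this
  exact hlin.congr_of_eventuallyEq heq

lemma f_bounds {f : ℝ → ℝ} {c₀ : ℝ} (hf : GoodPotential f c₀) {y : ℝ}
    (hy : y ∈ Set.Ioo (0:ℝ) 1) : 0 ≤ f y ∧ f y ≤ 1 := by
  constructor
  · have h0 : (0:ℝ) ∈ Set.Ico (0:ℝ) 1 := ⟨le_rfl, one_pos⟩
    have hy' : y ∈ Set.Ico (0:ℝ) 1 := ⟨hy.1.le, hy.2⟩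
    have := hf.mono h0 hy' hy.1.le
    rw [hf.f_zero] at this
    exact this
  · have hev : ∀ᶠ z in nhdsWithin 1 (Set.Iio 1), f y ≤ f z := by
      filter_upwards [Ioo_mem_nhdsLT_of_mem (⟨hy.2, le_rfl⟩ : (1:ℝ) ∈ Set.Ioc y 1)] with z hz
      exact hf.mono ⟨hy.1.le, hy.2⟩ ⟨(lt_trans hy.1 hz.1).le, hz.2⟩ hz.1.le
    exact ge_of_tendsto hf.lim_left hev

lemma c0_lt_one {f : ℝ → ℝ} {c₀ : ℝ} (hf : GoodPotential f c₀) : c₀ < 1 := by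
  have := hf.deriv_mem (1/2) (by norm_num)
  exact lt_of_lt_of_le this.1 this.2

set_option maxHeartbeats 1000000 in
lemma key_ineq {c₀ L d Q fp b s c : ℝ} (hc₀ : 0 < c₀) (hL : 0 < L)
    (hLc : 400 < c₀ ^ 2 * L) (hQ : 0 < Q) (hsc : s ^ 2 + c ^ 2 = 1) (hb9 : b ^ 2 ≤ 9)
    (hfpc : c₀ < fp) (hfp1 : fp ≤ 1) (hd : Q * (c₀ / 40) ≤ d) :
    Q * (c₀ / 20) ≤
      (L * (b ^ 2 + 1) * d - s * c * (L * (2 * b * -(fp * Q)))) /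
        (s ^ 2 + (L * (b ^ 2 + 1)) ^ 2 * c ^ 2) + -(-(fp * Q) / (1 + b ^ 2)) := by
  have hfp0 : 0 < fp := lt_trans hc₀ hfpc
  have hR : 0 < s ^ 2 + (L * (b ^ 2 + 1)) ^ 2 * c ^ 2 := den_pos (by positivity) hsc
  have hW : 0 < L * (b ^ 2 + 1) := by positivity
  set σ := |s| with hσdef
  set γ := |c| with hγdef
  set B := |b| with hBdef
  have hσ0 : 0 ≤ σ := abs_nonneg s
  have hγ0 : 0 ≤ γ := abs_nonneg c
  have hB0 : 0 ≤ B := abs_nonneg b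
  have hσs : σ ^ 2 = s ^ 2 := sq_abs s
  have hγc : γ ^ 2 = c ^ 2 := sq_abs c
  have hBb : B ^ 2 = b ^ 2 := sq_abs b
  have hσ1 : σ ^ 2 ≤ 1 := by nlinarith [hσs, hsc, sq_nonneg c]
  have hbsc : -(B * (σ * γ)) ≤ b * (s * c) := by
    have h := neg_abs_le (b * (s * c))
    rw [abs_mul, abs_mul] at h
    exact h
  -- second term
  have h2 : Q * (c₀ * 3 / 40) ≤ -(-(fp * Q) / (1 + b ^ 2)) := by
    rw [neg_div, neg_neg, le_div_iff₀ (by positivity : (0:ℝ) < 1 + b ^ 2)]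
    have hQc : 0 ≤ Q * c₀ := by positivity
    nlinarith [mul_le_mul_of_nonneg_left hb9 hQc,
      mul_le_mul_of_nonneg_left hfpc.le hQ.le]
  -- AM-GM core
  have hWL : c₀ ^ 2 * L ≤ c₀ ^ 2 * (L * (b ^ 2 + 1)) := by
    nlinarith [mul_nonneg (mul_nonneg (sq_nonneg c₀) hL.le) (sq_nonneg b)]
  have hinner : 0 ≤ c₀ ^ 2 * (L * (b ^ 2 + 1)) + c₀ ^ 2 * σ ^ 2
      + c₀ ^ 2 * (L * (b ^ 2 + 1)) ^ 2 * γ ^ 2 - 40 * c₀ * (L * (b ^ 2 + 1)) * σ * γ := by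
    nlinarith [sq_nonneg (c₀ * (L * (b ^ 2 + 1)) * γ - 20 * σ), hσ1, hWL, hLc,
      mul_nonneg (sq_nonneg c₀) (sq_nonneg σ)]
  have h40 : (0:ℝ) < 40 * c₀ := by linarith
  have hM : 0 ≤ (L * (b ^ 2 + 1)) * (c₀ / 40) + σ ^ 2 * (c₀ / 40)
      + (L * (b ^ 2 + 1)) ^ 2 * γ ^ 2 * (c₀ / 40) - (L * (b ^ 2 + 1)) * σ * γ := by
    have heq : 40 * c₀ * ((L * (b ^ 2 + 1)) * (c₀ / 40) + σ ^ 2 * (c₀ / 40)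
        + (L * (b ^ 2 + 1)) ^ 2 * γ ^ 2 * (c₀ / 40) - (L * (b ^ 2 + 1)) * σ * γ)
        = c₀ ^ 2 * (L * (b ^ 2 + 1)) + c₀ ^ 2 * σ ^ 2
        + c₀ ^ 2 * (L * (b ^ 2 + 1)) ^ 2 * γ ^ 2 - 40 * c₀ * (L * (b ^ 2 + 1)) * σ * γ := by
      ring
    have h0 : 40 * c₀ * (0:ℝ) ≤ 40 * c₀ * ((L * (b ^ 2 + 1)) * (c₀ / 40) + σ ^ 2 * (c₀ / 40)
        + (L * (b ^ 2 + 1)) ^ 2 * γ ^ 2 * (c₀ / 40) - (L * (b ^ 2 + 1)) * σ * γ) := by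
      rw [heq]; linarith [hinner]
    exact (mul_le_mul_iff_right₀ h40).mp h0
  -- cross term
  have h2fb : 2 * fp * B ≤ b ^ 2 + 1 := by
    nlinarith [sq_nonneg (B - 1), hBb, mul_le_mul_of_nonneg_right hfp1 hB0]
  have hcross : -(Q * (L * (b ^ 2 + 1)) * (σ * γ)) ≤ 2 * L * Q * fp * (b * (s * c)) := by
    have ha : 2 * L * Q * fp * (-(B * (σ * γ))) ≤ 2 * L * Q * fp * (b * (s * c)) :=
      mul_le_mul_of_nonneg_left hbsc (by positivity)
    have hb : 0 ≤ (Q * (L * (b ^ 2 + 1)) - 2 * L * Q * fp * B) * (σ * γ) := by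
      apply mul_nonneg _ (mul_nonneg hσ0 hγ0)
      have : 2 * L * Q * fp * B = (L * Q) * (2 * fp * B) := by ring
      rw [this]
      have h1 : (L * Q) * (2 * fp * B) ≤ (L * Q) * (b ^ 2 + 1) :=
        mul_le_mul_of_nonneg_left h2fb (by positivity)
      nlinarith [h1]
    nlinarith [ha, hb]
  -- first term
  have h1 : -(Q * (c₀ / 40)) ≤
      (L * (b ^ 2 + 1) * d - s * c * (L * (2 * b * -(fp * Q)))) /
        (s ^ 2 + (L * (b ^ 2 + 1)) ^ 2 * c ^ 2) := by
    rw [le_div_iff₀ hR]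
    have hdW : (L * (b ^ 2 + 1)) * (Q * (c₀ / 40)) ≤ (L * (b ^ 2 + 1)) * d :=
      mul_le_mul_of_nonneg_left hd hW.le
    have hMQ : 0 ≤ Q * ((L * (b ^ 2 + 1)) * (c₀ / 40) + σ ^ 2 * (c₀ / 40)
        + (L * (b ^ 2 + 1)) ^ 2 * γ ^ 2 * (c₀ / 40) - (L * (b ^ 2 + 1)) * σ * γ) :=
      mul_nonneg hQ.le hM
    have hσsQ : Q * σ ^ 2 = Q * s ^ 2 := by rw [hσs]
    have hγcQ : Q * ((L * (b ^ 2 + 1)) ^ 2 * γ ^ 2) = Q * ((L * (b ^ 2 + 1)) ^ 2 * c ^ 2) := by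
      rw [hγc]
    nlinarith [hdW, hMQ, hcross, hσsQ, hγcQ]
  have hfin : Q * (c₀ / 20) = -(Q * (c₀ / 40)) + Q * (c₀ * 3 / 40) - Q * (c₀ / 40) + Q * (c₀ / 40) := by
    ring
  linarith [h1, h2]

lemma theta_deriv {f : ℝ → ℝ} {c₀ : ℝ} (hf : GoodPotential f c₀) {lam E : ℝ}
    (hlam : 20 / c₀ < lam) (hE : |E| ≤ 2 * lam) (β : ℝ) (n : ℕ) {x : ℝ}
    (hx : x ∈ Set.Ioo (0:ℝ) 1) (hni : ∀ i : ℕ, i ≤ n → ∀ m : ℤ, (2:ℝ) ^ i * x ≠ m) :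
    ∃ d : ℝ, HasDerivAt (thetaS f lam E β n) d x ∧ (2:ℝ) ^ n * (c₀ / 20) ≤ d := by
  have hc₀ := hf.c₀_pos
  have hlam0 : 0 < lam := lt_trans (div_pos (by norm_num) hc₀) hlam
  have ht2 : |E / lam| ≤ 2 := by
    rw [abs_div, abs_of_pos hlam0, div_le_iff₀ hlam0]
    linarith
  set t := E / lam with htdef
  induction n with
  | zero =>
      have hfd : HasDerivAt f (deriv f x) x := hf.hasDeriv x hx
      have hfp := hf.deriv_mem x hx
      have h1 : HasDerivAt (fun z => t - f z) (-(deriv f x)) x := by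
        simpa using hfd.const_sub t
      have h3 : HasDerivAt (fun z => arccot (t - f z) + β)
          (-(-(deriv f x) / (1 + (t - f x) ^ 2))) x := by
        have h4 := ((h1.arctan).const_sub (π / 2)).add_const β
        have hfe : (fun z => π / 2 - Real.arctan (t - f z) + β)
            = (fun z => arccot (t - f z) + β) := by
          funext z; rw [arccot]
        rw [hfe] at h4
        refine h4.congr_deriv ?_
        ring
      refine ⟨_, h3, ?_⟩
      have hfx := f_bounds hf hx
      have hden : 1 + (t - f x) ^ 2 ≤ 10 := by
        have habs : |t - f x| ≤ 3 := by
          rw [abs_le] at ht2 ⊢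
          constructor <;> nlinarith [hfx.1, hfx.2]
        nlinarith [habs, abs_nonneg (t - f x), sq_abs (t - f x)]
      have hdenpos : 0 < 1 + (t - f x) ^ 2 := by positivity
      rw [neg_div, neg_neg]
      rw [pow_zero, one_mul, div_le_div_iff₀ (by norm_num) hdenpos]
      nlinarith [hfp.1, hfp.2, hden, hdenpos]
  | succ n ih =>
      obtain ⟨d, hd, hdge⟩ := ih (fun i hi m => hni i (Nat.le_succ_of_le hi) m)
      set y := Tdbl^[n + 1] x with hydef
      have hniy : ∀ m : ℤ, (2:ℝ) ^ (n+1) * x ≠ m := hni (n+1) le_rfl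
      have hy : y ∈ Set.Ioo (0:ℝ) 1 := Tdbl_iter_mem hx (n+1) hniy
      have hT : HasDerivAt (fun z => Tdbl^[n + 1] z) ((2:ℝ) ^ (n+1)) x :=
        hasDerivAt_Tdbl_iter hx (n+1) hniy
      have hfy : HasDerivAt f (deriv f y) y := hf.hasDeriv y hy
      set fp := deriv f y with hfpdef
      have hfT : HasDerivAt (fun z => f (Tdbl^[n + 1] z)) (fp * 2 ^ (n+1)) x :=
        hfy.comp x hT
      have htf : HasDerivAt (fun z => t - f (Tdbl^[n + 1] z)) (-(fp * 2 ^ (n+1))) x := by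
        simpa using hfT.const_sub t
      have hA : HasDerivAt (fun z => lam ^ 2 * gfun f t (Tdbl^[n + 1] z))
          (lam ^ 2 * (2 * (t - f y) * -(fp * 2 ^ (n+1)))) x := by
        have hmul := htf.mul htf
        have hsq : HasDerivAt (fun z => (t - f (Tdbl^[n + 1] z)) ^ 2 + 1)
            (2 * (t - f y) * -(fp * 2 ^ (n+1))) x := by
          have hfe : (fun z => (t - f (Tdbl^[n + 1] z)) ^ 2 + 1)
              = fun z => (t - f (Tdbl^[n + 1] z)) * (t - f (Tdbl^[n + 1] z)) + 1 := by
            funext z; ring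
          rw [hfe]
          have h5 := hmul.add_const 1
          refine h5.congr_deriv ?_
          rw [hydef]
          ring
        have h2 := hsq.const_mul (lam ^ 2)
        have hgf : (fun z => lam ^ 2 * gfun f t (Tdbl^[n + 1] z))
            = fun z => lam ^ 2 * ((t - f (Tdbl^[n + 1] z)) ^ 2 + 1) := by
          funext z; rw [gfun]
        rw [hgf]
        exact h2
      have hu : HasDerivAt (fun z => arccot (t - f (Tdbl^[n + 1] z)) + β)
          (-(-(fp * 2 ^ (n+1)) / (1 + (t - f y) ^ 2))) x := by
        have h4 := ((htf.arctan).const_sub (π / 2)).add_const β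
        have hfe : (fun z => π / 2 - Real.arctan (t - f (Tdbl^[n + 1] z)) + β)
            = (fun z => arccot (t - f (Tdbl^[n + 1] z)) + β) := by
          funext z; rw [arccot]
        rw [hfe] at h4
        refine h4.congr_deriv ?_
        rw [hydef]
        ring
      have haval : 0 < lam ^ 2 * gfun f t y := by
        have : (0:ℝ) < gfun f t y := by rw [gfun]; positivity
        positivity
      have hLS := hasDerivAt_LS_comp hA hd haval
      have hsum := hLS.add hu
      have hfun : (fun z => LS (lam ^ 2 * gfun f t (Tdbl^[n + 1] z)) (thetaS f lam E β n z)
          + (arccot (t - f (Tdbl^[n + 1] z)) + β)) = thetaS f lam E β (n+1) := by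
        funext z; simp only [thetaS]; rfl
      rw [← hfun]
      refine ⟨_, hsum, ?_⟩
      clear ih hni hniy hT hfT htf hA hu hLS hsum hfun hd hfy
      have hfybounds := f_bounds hf hy
      have hfp := hf.deriv_mem y hy
      have hsc : Real.sin (thetaS f lam E β n x) ^ 2 + Real.cos (thetaS f lam E β n x) ^ 2 = 1 := by
        have := Real.sin_sq_add_cos_sq (thetaS f lam E β n x); linarith [this]
      have hb9 : (t - f y) ^ 2 ≤ 9 := by
        rw [abs_le] at ht2
        nlinarith [hfybounds.1, hfybounds.2, ht2.1, ht2.2]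
      have hLc : 400 < c₀ ^ 2 * lam ^ 2 := by
        have h20 : 20 < c₀ * lam := by
          have := hlam
          rw [div_lt_iff₀ hc₀] at this
          linarith [this]
        nlinarith [h20, hc₀, hlam0]
      have hd40 : (2:ℝ) ^ (n + 1) * (c₀ / 40) ≤ d := by
        have heq : (2:ℝ) ^ (n + 1) * (c₀ / 40) = 2 ^ n * (c₀ / 20) := by
          rw [pow_succ]; ring
        linarith [hdge]
      have hgfun : gfun f t (Tdbl^[n + 1] x) = (t - f y) ^ 2 + 1 := by
        rw [← hydef, gfun]
      rw [hgfun]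
      exact key_ineq hc₀ (by positivity) hLc (by positivity) hsc hb9 hfp.1 hfp.2 hd40

lemma dyadic_int_aux {x : ℝ} {k i : ℕ} {j : ℤ} (hik : i ≤ k)
    (h1 : (j:ℝ) < 2 ^ k * x) (h2 : 2 ^ k * x < (j:ℝ) + 1) {m : ℤ}
    (heq : (2:ℝ) ^ i * x = m) : False := by
  have hsplit : (2:ℝ) ^ k = 2 ^ (k - i) * 2 ^ i := by
    rw [← pow_add]
    congr 1
    omega
  have hM : (2:ℝ) ^ k * x = ((2 ^ (k - i) * m : ℤ) : ℝ) := by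
    push_cast
    rw [hsplit, mul_assoc, heq]
  rw [hM] at h1 h2
  have h1' : j < 2 ^ (k - i) * m := by exact_mod_cast h1
  have h2' : (2:ℤ) ^ (k - i) * m < j + 1 := by exact_mod_cast h2
  omega

lemma nondyadic_of_mem_dyadic_Ioo {x : ℝ} {k : ℕ} {j : ℤ}
    (hx : x ∈ Set.Ioo ((j:ℝ) / 2 ^ k) (((j:ℝ) + 1) / 2 ^ k)) :
    ∀ i : ℕ, i ≤ k → ∀ m : ℤ, (2:ℝ) ^ i * x ≠ m := by
  have hp : (0:ℝ) < 2 ^ k := by positivity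
  have h1 : (j:ℝ) < 2 ^ k * x := by
    have := hx.1
    rw [div_lt_iff₀ hp] at this
    linarith [this]
  have h2 : 2 ^ k * x < (j:ℝ) + 1 := by
    have := hx.2
    rw [lt_div_iff₀ hp] at this
    linarith [this]
  intro i hik m heq
  exact dyadic_int_aux hik h1 h2 heq

lemma strictMono_thetaS {f : ℝ → ℝ} {c₀ : ℝ} (hf : GoodPotential f c₀) {lam E : ℝ}
    (hlam : 20 / c₀ < lam) (hE : |E| ≤ 2 * lam) (β : ℝ) (k : ℕ) (j : ℤ) :
    StrictMonoOn (thetaS f lam E β k)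
      (Set.Ioo ((j:ℝ) / 2 ^ k) (((j:ℝ) + 1) / 2 ^ k) ∩ Set.Ioo (0:ℝ) 1) := by
  set D : Set ℝ := Set.Ioo ((j:ℝ) / 2 ^ k) (((j:ℝ) + 1) / 2 ^ k) ∩ Set.Ioo (0:ℝ) 1 with hD
  have hconv : Convex ℝ D := (convex_Ioo _ _).inter (convex_Ioo _ _)
  have hopen : IsOpen D := isOpen_Ioo.inter isOpen_Ioo
  have hkey : ∀ x ∈ D, ∃ d, HasDerivAt (thetaS f lam E β k) d x ∧ 0 < d := by
    intro x hx
    have hnd := nondyadic_of_mem_dyadic_Ioo hx.1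
    obtain ⟨d, hd, hdge⟩ := theta_deriv hf hlam hE β k hx.2 hnd
    refine ⟨d, hd, lt_of_lt_of_le ?_ hdge⟩
    have := hf.c₀_pos
    positivity
  apply strictMonoOn_of_deriv_pos hconv
  · intro x hx
    exact ((hkey x hx).choose_spec.1.differentiableAt.continuousAt).continuousWithinAt
  · intro x hx
    rw [hopen.interior_eq] at hx
    obtain ⟨d, hd, hdpos⟩ := hkey x hx
    rw [hd.deriv]
    exact hdpos

lemma countable_level {f : ℝ → ℝ} {c₀ : ℝ} (hf : GoodPotential f c₀) {lam E : ℝ}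
    (hlam : 20 / c₀ < lam) (hE : |E| ≤ 2 * lam) (β : ℝ) (k : ℕ) (j : ℤ) :
    ({x ∈ Set.Ioo ((j:ℝ) / 2 ^ k) (((j:ℝ) + 1) / 2 ^ k) ∩ Set.Ioo (0:ℝ) 1 |
      Real.cos (thetaS f lam E β k x) = 0}).Countable := by
  set S := {x ∈ Set.Ioo ((j:ℝ) / 2 ^ k) (((j:ℝ) + 1) / 2 ^ k) ∩ Set.Ioo (0:ℝ) 1 |
      Real.cos (thetaS f lam E β k x) = 0} with hS
  have hinj : Set.InjOn (thetaS f lam E β k) S :=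
    ((strictMono_thetaS hf hlam hE β k j).injOn).mono (fun x hx => hx.1)
  apply Set.countable_of_injective_of_countable_image hinj
  have himg : thetaS f lam E β k '' S ⊆
      Set.range (fun m : ℤ => (2 * (m:ℝ) + 1) * π / 2) := by
    rintro _ ⟨x, hx, rfl⟩
    have := hx.2
    rw [Real.cos_eq_zero_iff] at this
    obtain ⟨m, hm⟩ := this
    exact ⟨m, hm.symm⟩
  exact Set.Countable.mono himg (Set.countable_range _)

/-- the set Ω₀ = ⋃ₖ {x : cos θ_k(x) = 0} has Lebesgue measure zero. -/
theorem omega0_null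
    (f : ℝ → ℝ) (c₀ : ℝ) (hf : GoodPotential f c₀) :
    ∃ lam₀ > (0 : ℝ), ∀ lam : ℝ, lam > lam₀ →
      ∀ E : ℝ, |E| ≤ 2 * lam → ∀ β : ℝ,
        volume (Set.Ico (0 : ℝ) 1 ∩ Omega0 f lam E β) = 0 := by
  have hc₀ := hf.c₀_pos
  refine ⟨20 / c₀, by positivity, ?_⟩
  intro lam hlam E hE β
  have hlam0 : 0 < lam := lt_trans (by positivity) hlam
  set C : Set ℝ := (⋃ i : ℕ, Set.range (fun m : ℤ => (m:ℝ) / 2 ^ i)) ∪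
      (⋃ k : ℕ, ⋃ j : ℤ, {x ∈ Set.Ioo ((j:ℝ) / 2 ^ k) (((j:ℝ) + 1) / 2 ^ k) ∩ Set.Ioo (0:ℝ) 1 |
        Real.cos (thetaS f lam E β k x) = 0}) with hC
  have hCc : C.Countable := by
    apply Set.Countable.union
    · exact Set.countable_iUnion (fun i => Set.countable_range _)
    · exact Set.countable_iUnion (fun k => Set.countable_iUnion
        (fun j => countable_level hf hlam hE β k j))
  have hsub : Set.Ico (0:ℝ) 1 ∩ Omega0 f lam E β ⊆ C := by
    rintro x ⟨hx01, hxom⟩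
    obtain ⟨k, hcos⟩ := hxom
    by_cases hdy : ∃ i : ℕ, ∃ m : ℤ, (2:ℝ) ^ i * x = m
    · left
      obtain ⟨i, m, him⟩ := hdy
      refine Set.mem_iUnion.mpr ⟨i, ⟨m, ?_⟩⟩
      have hp : (0:ℝ) < 2 ^ i := by positivity
      field_simp
      linarith [him]
    · right
      push_neg at hdy
      have hx0 : x ≠ 0 := by
        intro h
        apply hdy 0 0
        rw [h]
        norm_num
      have hxIoo : x ∈ Set.Ioo (0:ℝ) 1 := ⟨lt_of_le_of_ne hx01.1 (Ne.symm hx0), hx01.2⟩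
      set j : ℤ := ⌊(2:ℝ) ^ k * x⌋ with hj
      have hp : (0:ℝ) < 2 ^ k := by positivity
      have hjx : x ∈ Set.Ioo ((j:ℝ) / 2 ^ k) (((j:ℝ) + 1) / 2 ^ k) := by
        constructor
        · rw [div_lt_iff₀ hp]
          have hle : (j:ℝ) ≤ 2 ^ k * x := Int.floor_le _
          have hne : (2:ℝ) ^ k * x ≠ (j:ℝ) := hdy k j
          have : (j:ℝ) < 2 ^ k * x := lt_of_le_of_ne hle (Ne.symm hne)
          linarith [this]
        · rw [lt_div_iff₀ hp]
          have := Int.lt_floor_add_one ((2:ℝ) ^ k * x)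
          linarith [this]
      refine Set.mem_iUnion.mpr ⟨k, Set.mem_iUnion.mpr ⟨j, ⟨⟨hjx, hxIoo⟩, ?_⟩⟩⟩
      rw [← theta_eq_thetaS f lam E β (ne_of_gt hlam0) k x]
      exact hcos
  exact MeasureTheory.measure_mono_null hsub (Set.Countable.measure_zero hCc volume)
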